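/- The factor-2 bound on manipulation is tight: for every real number c < 2 there exist a number of agents n, a number of items m, truthful rankings for all agents, a picking sequence π, an injective positive utility function u for the manipulator consistent with her truthful ranking, and a reported ranking ≻, such that u(φ_≻(a₁)) > c · u_T. -/
import Mathlib


/-- One step of the sequential allocation process: an agent with ranking `rk`
(a bijection `Fin m ≃ Fin m`, lower rank = more preferred) greedily picks the
lowest-rank item among the remaining ones (the complement of the already
picked set `S`); if nothing is left, nothing happens. -/
def pickStep {m : ℕ} (rk : Fin m ≃ Fin m) (S : Finset (Fin m)) : Finset (Fin m) :=
  S ∪ Sᶜ.filter fun i => ∀ j ∈ Sᶜ, rk i ≤ rk j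

/-- `pickedUpTo rpt π t` : the set of items picked during the first `t` steps of
the sequential allocation process, where `π` is the (0-indexed) picking sequence
and agent `a` reports the ranking `rpt a`. -/
def pickedUpTo {A : Type*} {m : ℕ} (rpt : A → Fin m ≃ Fin m) (π : ℕ → A) :
    ℕ → Finset (Fin m)
  | 0 => ∅
  | t + 1 => pickStep (rpt (π t)) (pickedUpTo rpt π t)

/-- `alloc rpt π a` : the bundle of items obtained by agent `a` at the end of the
sequential allocation process (which runs for `m` steps). -/
def alloc {A : Type*} [DecidableEq A] {m : ℕ} (rpt : A → Fin m ≃ Fin m)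
    (π : ℕ → A) (a : A) : Finset (Fin m) :=
  (Finset.range m).biUnion fun t =>
    if π t = a then pickedUpTo rpt π (t + 1) \ pickedUpTo rpt π t else ∅

def rk2 : Fin 3 ≃ Fin 3 := ⟨![2,0,1], ![1,2,0], by decide, by decide⟩
def rkT : Fin 2 → Fin 3 ≃ Fin 3 := ![Equiv.refl _, rk2]
def seq0 : ℕ → Fin 2 := fun t => if t = 1 then 1 else 0
def rep : Fin 3 ≃ Fin 3 := ⟨![1,0,2], ![1,0,2], by decide, by decide⟩

lemma allocT : alloc rkT seq0 0 = {0, 2} := by decide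
lemma allocM : alloc (Function.update rkT 0 rep) seq0 0 = {0, 1} := by decide

/-- the factor-2 bound on manipulation is tight: for every `c < 2`
there are a number `n` of agents, a number `m` of items, truthful rankings `rk`,
a picking sequence `π`, an injective positive utility function `u` for the
manipulator `a₁`, consistent with her truthful ranking
(`rk a₁ i < rk a₁ j ↔ u j < u i`), and a reported ranking `r` such that
`u(φ_r(a₁)) > c · u_T`, where `u_T` is the utility of the bundle `a₁` gets when
reporting truthfully. -/
theorem statement14 (c : ℝ) (hc : c < 2) :
    ∃ (n m : ℕ) (a₁ : Fin n) (rk : Fin n → Fin m ≃ Fin m) (π : ℕ → Fin n)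
      (u : Fin m → ℝ) (r : Fin m ≃ Fin m),
      (∀ i, 0 < u i) ∧ Function.Injective u ∧
      (∀ i j, rk a₁ i < rk a₁ j ↔ u j < u i) ∧
      c * ∑ i ∈ alloc rk π a₁, u i
        < ∑ i ∈ alloc (Function.update rk a₁ r) π a₁, u i := by
  obtain ⟨ε, hε0, hε1, hε2⟩ : ∃ ε : ℝ, 0 < ε ∧ ε ≤ 1 / 4 ∧ ε ≤ (2 - c) / 4 :=
    ⟨min ((2 - c) / 4) (1 / 4), lt_min (by linarith) (by norm_num),
      min_le_right _ _, min_le_left _ _⟩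
  refine ⟨2, 3, 0, rkT, seq0, ![1, 1 - ε, ε / 2], rep, ?_, ?_, ?_, ?_⟩
  · intro i; fin_cases i <;> simp <;> linarith
  · intro i j h
    fin_cases i <;> fin_cases j <;> simp_all <;> linarith
  · intro i j
    fin_cases i <;> fin_cases j <;>
      simp [rkT, rk2, Fin.lt_def] <;> linarith
  · rw [allocT, allocM]
    rw [show ({0, 2} : Finset (Fin 3)) = insert 0 {2} from rfl,
        show ({0, 1} : Finset (Fin 3)) = insert 0 {1} from rfl]
    rw [Finset.sum_insert (by decide), Finset.sum_insert (by decide),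
        Finset.sum_singleton, Finset.sum_singleton]
    simp only [Matrix.cons_val_zero, Matrix.cons_val_one, Matrix.head_cons,
      Matrix.cons_val_two, Matrix.tail_cons]
    rcases le_or_gt c (-2) with h | h
    · nlinarith
    · nlinarith
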